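/- arXiv:1406.3840 — 3 statements merged into one kernel-verified Lean document; each statement's English description precedes it below -/
import Mathlib

section
/- Let $0 < \nu_1 < \nu_2 < \cdots < \nu_K$ be positive reals and define the allocation $M^*_k = \min\{1 - \sum_{i=1}^{k-1} M^*_i,\ \nu_k\}$ recursively. Then $M^*$ is feasible, i.e., $M^*_k \geq 0$ for all $k$ and $\sum_{k=1}^K M^*_k \leq 1$, and $M^*$ maximises $\sum_{k=1}^K \min\{1, M_k/\nu_k\}$ over all nonnegative vectors $M$ with $\sum_{k=1}^K M_k \leq 1$. -/
open Finset

/-- Cumulative sum of the greedy allocation: `allocSum ν k = ∑_{i<k} M*_i`. -/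
def allocSum (ν : ℕ → ℝ) : ℕ → ℝ
  | 0 => 0
  | k + 1 => allocSum ν k + min (1 - allocSum ν k) (ν k)

/-- The greedy allocation `M*_k = min (1 - ∑_{i<k} M*_i) (ν k)` (0-indexed). -/
def Mstar (ν : ℕ → ℝ) (k : ℕ) : ℝ := min (1 - allocSum ν k) (ν k)

lemma sum_Mstar (ν : ℕ → ℝ) (k : ℕ) : ∑ i ∈ range k, Mstar ν i = allocSum ν k := by
  induction k with
  | zero => simp [allocSum]
  | succ n ih => rw [Finset.sum_range_succ, ih]; rfl

lemma allocSum_bounds (K : ℕ) (ν : ℕ → ℝ) (hpos : ∀ k, k < K → 0 < ν k) :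
    ∀ k, k ≤ K → 0 ≤ allocSum ν k ∧ allocSum ν k ≤ 1 := by
  intro k
  induction k with
  | zero => intro _; simp [allocSum]
  | succ n ih =>
    intro hn
    obtain ⟨h0, h1⟩ := ih (Nat.le_of_succ_le hn)
    have hν := hpos n (by omega)
    rw [allocSum]
    constructor
    · have : (0:ℝ) ≤ min (1 - allocSum ν n) (ν n) := le_min (by linarith) (le_of_lt hν)
      linarith
    · have : min (1 - allocSum ν n) (ν n) ≤ 1 - allocSum ν n := min_le_left _ _
      linarith

theorem stmt0 (K : ℕ) (ν : ℕ → ℝ)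
    (hpos : ∀ k, k < K → 0 < ν k)
    (hmono : ∀ i j, i < j → j < K → ν i < ν j) :
    (∀ k, k < K → 0 ≤ Mstar ν k) ∧
    (∑ k ∈ range K, Mstar ν k ≤ 1) ∧
    (∀ M : ℕ → ℝ, (∀ k, k < K → 0 ≤ M k) → (∑ k ∈ range K, M k ≤ 1) →
      ∑ k ∈ range K, min 1 (M k / ν k) ≤ ∑ k ∈ range K, min 1 (Mstar ν k / ν k)) := by
  have hbnd := allocSum_bounds K ν hpos
  refine ⟨?_, ?_, ?_⟩
  · intro k hk
    exact le_min (by linarith [(hbnd k (le_of_lt hk)).2]) (le_of_lt (hpos k hk))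
  · rw [sum_Mstar]; exact (hbnd K le_rfl).2
  · intro M hM hMsum
    by_cases hex : ∃ k, k < K ∧ 1 - allocSum ν k < ν k
    · -- Case B : some job is only partially funded
      set m := Nat.find hex with hmdef
      obtain ⟨hmK, hmpart⟩ := Nat.find_spec hex
      have hνm : 0 < ν m := hpos m hmK
      -- jobs before m are fully funded
      have hfull : ∀ j, j < m → ν j ≤ 1 - allocSum ν j := by
        intro j hj
        have := Nat.find_min hex hj
        push_neg at this
        exact this (lt_trans hj hmK)
      -- allocSum stays 1 after m+1
      have hS1 : ∀ j, m + 1 ≤ j → j ≤ K → allocSum ν j = 1 := by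
        intro j
        induction j with
        | zero => omega
        | succ n ih =>
          intro h1 h2
          rcases Nat.lt_or_ge m n with hlt | hge
          · have hn1 : allocSum ν n = 1 := ih (by omega) (by omega)
            rw [allocSum, hn1]
            have : min (1 - (1:ℝ)) (ν n) = 0 := by
              rw [sub_self]
              exact min_eq_left (le_of_lt (hpos n (by omega)))
            rw [this]; ring
          · have hmn : m = n := by omega
            subst hmn
            rw [allocSum, min_eq_left (le_of_lt hmpart)]
            ring
      have hsumstar : ∑ k ∈ range K, Mstar ν k = 1 := by
        rw [sum_Mstar]; exact hS1 K (by omega) le_rfl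
      -- per-term inequality
      have key : ∀ k ∈ range K,
          min 1 (M k / ν k) ≤ min 1 (Mstar ν k / ν k) + (M k - Mstar ν k) / ν m := by
        intro k hk
        rw [mem_range] at hk
        have hνk : 0 < ν k := hpos k hk
        rcases lt_trichotomy k m with hkm | hkm | hkm
        · -- fully funded job
          have hMk : Mstar ν k = ν k := min_eq_right (hfull k hkm)
          have hνlt : ν k < ν m := hmono k m hkm hmK
          rw [hMk, div_self (ne_of_gt hνk), min_self]
          by_cases hge : ν k ≤ M k
          · have : 0 ≤ (M k - ν k) / ν m := div_nonneg (by linarith) (le_of_lt hνm)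
            linarith [min_le_left 1 (M k / ν k)]
          · push_neg at hge
            have h1 : M k / ν k - 1 = (M k - ν k) / ν k := by field_simp
            have h2 : (M k - ν k) / ν k ≤ (M k - ν k) / ν m := by
              rw [div_le_div_iff₀ hνk hνm]
              nlinarith
            linarith [min_le_right 1 (M k / ν k)]
        · -- the partially funded job
          subst hkm
          have hr0 : 0 ≤ 1 - allocSum ν m := by linarith [(hbnd m (le_of_lt hk)).2]
          have hMk : Mstar ν m = 1 - allocSum ν m := min_eq_left (le_of_lt hmpart)
          rw [hMk]
          have hle1 : (1 - allocSum ν m) / ν m ≤ 1 :=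
            (div_le_one hνm).mpr (le_of_lt hmpart)
          rw [min_eq_right hle1, ← add_div]
          have : 1 - allocSum ν m + (M m - (1 - allocSum ν m)) = M m := by ring
          rw [this]
          exact min_le_right _ _
        · -- unfunded job
          have hMk : Mstar ν k = 0 := by
            unfold Mstar
            rw [hS1 k (by omega) (le_of_lt hk), sub_self]
            exact min_eq_left (le_of_lt hνk)
          have hνlt : ν m < ν k := hmono m k hkm hk
          have hMk0 : 0 ≤ M k := hM k hk
          rw [hMk, zero_div, min_eq_right (le_refl (0:ℝ) |>.trans zero_le_one)]
          have h2 : M k / ν k ≤ M k / ν m := by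
            rw [div_le_div_iff₀ hνk hνm]
            nlinarith
          have := min_le_right 1 (M k / ν k)
          rw [sub_zero]
          linarith
      calc ∑ k ∈ range K, min 1 (M k / ν k)
          ≤ ∑ k ∈ range K, (min 1 (Mstar ν k / ν k) + (M k - Mstar ν k) / ν m) :=
            Finset.sum_le_sum key
        _ = ∑ k ∈ range K, min 1 (Mstar ν k / ν k)
              + (∑ k ∈ range K, M k - ∑ k ∈ range K, Mstar ν k) / ν m := by
            rw [Finset.sum_add_distrib, ← Finset.sum_div, Finset.sum_sub_distrib]
        _ ≤ ∑ k ∈ range K, min 1 (Mstar ν k / ν k) := by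
            have : (∑ k ∈ range K, M k - ∑ k ∈ range K, Mstar ν k) / ν m ≤ 0 := by
              apply div_nonpos_of_nonpos_of_nonneg _ (le_of_lt hνm)
              rw [hsumstar]; linarith
            linarith
    · -- Case A : every job is fully funded
      push_neg at hex
      apply Finset.sum_le_sum
      intro k hk
      rw [mem_range] at hk
      have hνk := hpos k hk
      have hMk : Mstar ν k = ν k := min_eq_right (hex k hk)
      rw [hMk, div_self (ne_of_gt hνk), min_self]
      exact min_le_left _ _
end

section
/- Let $X_1, \ldots, X_n$ be a martingale difference sequence adapted to a filtration $\{\mathcal{F}_t\}$ (i.e., $\mathbb{E}[X_t \mid \mathcal{F}_{t-1}] = 0$), and let $R_t$ be $\mathcal{F}_{t-1}$-measurable with $X_t \leq R_t$ almost surely. Set $R = \max_{t \leq n} R_t$ and $V^2 = \sum_{t=1}^n \mathrm{Var}[X_t \mid \mathcal{F}_{t-1}]$. Then for any $\epsilon, r, v > 0$: $\Pr\left[\sum_{t=1}^n X_t \geq \epsilon,\ V^2 \leq v,\ R \leq r\right] \leq \exp\left(-\frac{\epsilon^2}{2v + \frac{2\epsilon r}{3}}\right)$. -/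
open MeasureTheory Finset Real

section Stmt6Aux
open Real
lemma stmt6_aux_antitone {g g' : ℝ → ℝ} (hg : ∀ u, HasDerivAt g (g' u) u)
    (hd : ∀ u, 0 ≤ u → g' u ≤ 0) : ∀ u, 0 ≤ u → g u ≤ g 0 := by
  intro u hu
  have h : AntitoneOn g (Set.Ici 0) := by
    apply antitoneOn_of_deriv_nonpos (convex_Ici 0)
    · exact fun x _ => (hg x).differentiableAt.continuousAt.continuousWithinAt
    · exact fun x _ => (hg x).differentiableAt.differentiableWithinAt
    · intro x hx
      rw [(hg x).deriv]
      exact hd x (le_of_lt (by simpa using hx))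
  exact h Set.self_mem_Ici hu hu

lemma stmt6_exp_quad_neg {u : ℝ} (hu : u ≤ 0) : exp u ≤ 1 + u + u ^ 2 / 2 := by
  have key : ∀ x : ℝ, x ≤ 0 → exp x - (1 + x + x ^ 2 / 2) ≤ exp 0 - (1 + 0 + 0 ^ 2 / 2) := by
    have hD : ∀ x : ℝ, HasDerivAt (fun x : ℝ => exp x - (1 + x + x ^ 2 / 2))
        (exp x - (1 + x)) x := by
      intro x
      have h2 : HasDerivAt (fun x : ℝ => 1 + x + x ^ 2 / 2) (1 + x) x := by
        have := ((hasDerivAt_id x).const_add 1).add ((hasDerivAt_pow 2 x).div_const 2)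
        refine this.congr_deriv ?_
        push_cast
        ring
      exact (Real.hasDerivAt_exp x).sub h2
    have hmono : MonotoneOn (fun x : ℝ => exp x - (1 + x + x ^ 2 / 2)) (Set.Iic 0) := by
      apply monotoneOn_of_deriv_nonneg (convex_Iic 0)
      · exact fun x _ => (hD x).differentiableAt.continuousAt.continuousWithinAt
      · exact fun x _ => (hD x).differentiableAt.differentiableWithinAt
      · intro x hx
        rw [(hD x).deriv]
        have := add_one_le_exp x
        linarith
    intro x hx
    exact hmono hx Set.self_mem_Iic hx
  have := key u hu
  simp only [Real.exp_zero] at this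
  nlinarith [this]

lemma stmt6_exp_cubic {u : ℝ} (hu : 0 ≤ u) : (3 - u) * (exp u - 1 - u) ≤ 3 / 2 * u ^ 2 := by
  have h2 : ∀ x, 0 ≤ x → (1 - x) * exp x - 1 ≤ 0 := by
    have := stmt6_aux_antitone (g := fun x => (1 - x) * exp x - 1) (g' := fun x => -x * exp x)
      (fun x => by
        have := (((hasDerivAt_id x).neg.const_add 1).mul (Real.hasDerivAt_exp x)).sub_const 1
        refine this.congr_deriv ?_
        simp only [Pi.neg_apply, id_eq]
        ring)
      (fun x hx => by
        show -x * rexp x ≤ 0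
        nlinarith [exp_pos x])
    intro x hx; simpa using this x hx
  have h1 : ∀ x, 0 ≤ x → (2 - x) * exp x - 2 - x ≤ 0 := by
    have := stmt6_aux_antitone (g := fun x => (2 - x) * exp x - 2 - x)
      (g' := fun x => (1 - x) * exp x - 1)
      (fun x => by
        have := ((((hasDerivAt_id x).neg.const_add 2).mul (Real.hasDerivAt_exp x)).sub_const 2).sub
          (hasDerivAt_id x)
        refine this.congr_deriv ?_
        simp only [Pi.neg_apply, id_eq]
        ring)
      (fun x hx => h2 x hx)
    intro x hx; simpa using this x hx
  have h0 : ∀ x, 0 ≤ x → (3 - x) * (exp x - 1 - x) - 3 / 2 * x ^ 2 ≤ 0 := by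
    have := stmt6_aux_antitone (g := fun x => (3 - x) * (exp x - 1 - x) - 3 / 2 * x ^ 2)
      (g' := fun x => (2 - x) * exp x - 2 - x)
      (fun x => by
        have := (((hasDerivAt_id x).neg.const_add 3).mul
          (((Real.hasDerivAt_exp x).sub_const 1).sub (hasDerivAt_id x))).sub
          ((hasDerivAt_pow 2 x).const_mul (3 / 2 : ℝ))
        refine this.congr_deriv ?_
        simp only [Pi.neg_apply, Pi.sub_apply, id_eq]
        push_cast
        ring)
      (fun x hx => h1 x hx)
    intro x hx; simpa using this x hx
  linarith [h0 u hu]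

lemma stmt6_exp_key {u w : ℝ} (huw : u ≤ w) (hw0 : 0 < w) (hw3 : w < 3) :
    exp u ≤ 1 + u + 3 / (2 * (3 - w)) * u ^ 2 := by
  have h3w : 0 < 3 - w := by linarith
  rcases le_or_gt u 0 with hu | hu
  · have h := stmt6_exp_quad_neg hu
    have : u ^ 2 / 2 ≤ 3 / (2 * (3 - w)) * u ^ 2 := by
      rw [div_eq_mul_inv, mul_comm]
      apply mul_le_mul_of_nonneg_right _ (sq_nonneg u)
      rw [le_div_iff₀ (by positivity)]
      linarith
    linarith
  · have h := stmt6_exp_cubic hu.le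
    have hge : 0 ≤ exp u - 1 - u := by nlinarith [add_one_le_exp u]
    have h2 : (3 - w) * (exp u - 1 - u) ≤ 3 / 2 * u ^ 2 := by nlinarith
    have h3 : exp u - 1 - u ≤ 3 / (2 * (3 - w)) * u ^ 2 := by
      rw [div_mul_eq_mul_div, le_div_iff₀ (by positivity)]
      nlinarith
    linarith
end Stmt6Aux

/-- Martingale (Freedman-style) Bernstein inequality with predictable random range
bounds: if `E[X_t | F_{t-1}] = 0`, `X_t ≤ R_t` a.s. with `R_t` `F_{t-1}`-measurable,
`R = max_{t ≤ n} R_t` and `V² = ∑_{t=1}^n Var[X_t | F_{t-1}]`, then for `ε, r, v > 0`,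
`P[∑ X_t ≥ ε, V² ≤ v, R ≤ r] ≤ exp(-ε²/(2v + 2εr/3))`. -/
theorem stmt6 {Ω : Type*} {m0 : MeasurableSpace Ω} (μ : Measure Ω) [IsProbabilityMeasure μ]
    (ℱ : Filtration ℕ m0) (n : ℕ) (hn : 1 ≤ n) (X R : ℕ → Ω → ℝ)
    (hadapted : ∀ t, StronglyMeasurable[ℱ t] (X t))
    (hint : ∀ t, MemLp (X t) 2 μ)
    (hmds : ∀ t ∈ Icc 1 n, μ[X t|ℱ (t - 1)] =ᵐ[μ] 0)
    (hR : ∀ t ∈ Icc 1 n, StronglyMeasurable[ℱ (t - 1)] (R t))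
    (hXR : ∀ t ∈ Icc 1 n, ∀ᵐ ω ∂μ, X t ω ≤ R t ω)
    (ε r v : ℝ) (hε : 0 < ε) (hr : 0 < r) (hv : 0 < v) :
    μ {ω | ε ≤ ∑ t ∈ Icc 1 n, X t ω ∧
        (∑ t ∈ Icc 1 n, (μ[X t ^ 2|ℱ (t - 1)]) ω) ≤ v ∧
        ((Icc 1 n).sup' (Finset.nonempty_Icc.mpr hn) fun t => R t ω) ≤ r}
      ≤ ENNReal.ofReal (exp (-(ε ^ 2 / (2 * v + 2 * ε * r / 3)))) := by
  have hden : (0:ℝ) < 3 * v + ε * r := by positivity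
  set l : ℝ := 3 * ε / (3 * v + ε * r) with hl_def
  have hl : 0 < l := by positivity
  have hlr3 : l * r < 3 := by
    rw [hl_def, div_mul_eq_mul_div, div_lt_iff₀ hden]
    nlinarith
  have h3lr : (0:ℝ) < 3 - l * r := by linarith
  set c : ℝ := 3 / (2 * (3 - l * r)) * l ^ 2 with hc_def
  have hc : 0 < c := by positivity
  -- pointwise exponential bound
  have hkey : ∀ x : ℝ, x ≤ r → exp (l * x) ≤ 1 + l * x + c * x ^ 2 := by
    intro x hx
    have h := stmt6_exp_key (u := l * x) (w := l * r)
      (mul_le_mul_of_nonneg_left hx hl.le) (by positivity) hlr3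
    have heq : c * x ^ 2 = 3 / (2 * (3 - l * r)) * (l * x) ^ 2 := by rw [hc_def]; ring
    linarith
  -- definitions
  set S : ℕ → Ω → ℝ := fun k ω => ∑ t ∈ Icc 1 k, X t ω with hS_def
  set V : ℕ → Ω → ℝ := fun k ω => ∑ t ∈ Icc 1 k, (μ[X t ^ 2|ℱ (t - 1)]) ω with hV_def
  set C : ℕ → Set Ω := fun k => {ω | ∀ t ∈ Icc 1 k, R t ω ≤ r} with hC_def
  set F : ℕ → Ω → ℝ :=
    fun k => (C k).indicator fun ω => exp (l * S k ω - c * V k ω) with hF_def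
  -- measurability
  have hSmeas : ∀ k, StronglyMeasurable[ℱ k] (S k) := by
    intro k
    exact Finset.stronglyMeasurable_fun_sum _ fun t ht =>
      (hadapted t).mono (ℱ.mono (Finset.mem_Icc.1 ht).2)
  have hVmeas : ∀ m k, k ≤ m + 1 → StronglyMeasurable[ℱ m] (V k) := by
    intro m k hk
    exact Finset.stronglyMeasurable_fun_sum _ fun t ht =>
      stronglyMeasurable_condExp.mono (ℱ.mono (by
        have := (Finset.mem_Icc.1 ht).2; omega))
  have hCmeas : ∀ m k, k ≤ m + 1 → k ≤ n → MeasurableSet[ℱ m] (C k) := by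
    intro m k hk hkn
    have hCk : C k = ⋂ t ∈ Icc 1 k, {ω | R t ω ≤ r} := by
      ext ω; simp [hC_def]
    rw [hCk]
    refine MeasurableSet.biInter (Set.to_countable _) fun t ht => ?_
    have ht' := Finset.mem_Icc.1 ht
    have htn : t ∈ Icc 1 n := Finset.mem_Icc.2 ⟨ht'.1, le_trans ht'.2 hkn⟩
    have hmeas : MeasurableSet[ℱ (t - 1)] {ω | R t ω ≤ r} :=
      (hR t htn).measurable measurableSet_Iic
    exact ℱ.mono (by omega) _ hmeas
  have hf_meas : ∀ m k j, k ≤ m + 1 → k ≤ n → j ≤ m →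
      StronglyMeasurable[ℱ m] ((C k).indicator fun ω => exp (l * S j ω - c * V k ω)) := by
    intro m k j hk hkn hj
    refine StronglyMeasurable.indicator ?_ (hCmeas m k hk hkn)
    refine Continuous.comp_stronglyMeasurable Real.continuous_exp ?_
    exact ((((hSmeas j).mono (ℱ.mono hj)).const_mul l)).sub
      ((hVmeas m k hk).const_mul c)
  -- a.e. facts
  have hae : ∀ᵐ ω ∂μ, ∀ t, t ∈ Icc 1 n →
      X t ω ≤ R t ω ∧ 0 ≤ (μ[X t ^ 2|ℱ (t - 1)]) ω := by
    rw [ae_all_iff]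
    intro t
    by_cases ht : t ∈ Icc 1 n
    · filter_upwards [hXR t ht,
        condExp_nonneg (m := ℱ (t - 1)) (μ := μ) (f := X t ^ 2)
          (ae_of_all _ fun ω => by simp [sq_nonneg])] with ω h1 h2
      exact fun _ => ⟨h1, h2⟩
    · exact ae_of_all _ fun ω h => absurd h ht
  -- a.e. bound on indicator functions
  have hbound : ∀ k j, k ≤ n → j ≤ k → ∀ᵐ ω ∂μ,
      ‖(C k).indicator (fun ω => exp (l * S j ω - c * V k ω)) ω‖ ≤ exp (l * (j * r)) := by
    intro k j hkn hjk
    filter_upwards [hae] with ω hω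
    by_cases hωC : ω ∈ C k
    · rw [Set.indicator_of_mem hωC, Real.norm_eq_abs, abs_of_pos (exp_pos _), exp_le_exp]
      have hS : S j ω ≤ (j : ℝ) * r := by
        calc S j ω ≤ ∑ t ∈ Icc 1 j, r := by
              refine Finset.sum_le_sum fun t ht => ?_
              have ht' := Finset.mem_Icc.1 ht
              have htn : t ∈ Icc 1 n := Finset.mem_Icc.2 ⟨ht'.1, by omega⟩
              have htk : t ∈ Icc 1 k := Finset.mem_Icc.2 ⟨ht'.1, by omega⟩
              exact le_trans (hω t htn).1 (hωC t htk)
          _ = (j : ℝ) * r := by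
              rw [Finset.sum_const, Nat.card_Icc, nsmul_eq_mul]
              norm_num
      have hV : 0 ≤ V k ω := by
        refine Finset.sum_nonneg fun t ht => ?_
        have ht' := Finset.mem_Icc.1 ht
        exact (hω t (Finset.mem_Icc.2 ⟨ht'.1, by omega⟩)).2
      nlinarith
    · rw [Set.indicator_of_notMem hωC]
      simp [(exp_pos _).le]
  -- integrability
  have hFint : ∀ k j, k ≤ n → j ≤ k →
      Integrable ((C k).indicator fun ω => exp (l * S j ω - c * V k ω)) μ := by
    intro k j hkn hjk
    refine Integrable.mono' (integrable_const (exp (l * (j * r)))) ?_ (hbound k j hkn hjk)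
    exact ((hf_meas k k j (by omega) hkn hjk).mono (ℱ.le k)).aestronglyMeasurable
  -- base case
  have hI0 : ∫ ω, F 0 ω ∂μ = 1 := by
    have hF0 : F 0 = fun _ => 1 := by
      funext ω
      have h0 : (Icc 1 0 : Finset ℕ) = ∅ := by simp
      have hωC : ω ∈ C 0 := by intro t ht; rw [h0] at ht; exact absurd ht (Finset.notMem_empty t)
      rw [hF_def]
      simp only [Set.indicator_of_mem hωC, hS_def, hV_def, h0, Finset.sum_empty]
      norm_num
    rw [hF0]
    simp
  -- main induction
  have hmain : ∀ k, k ≤ n → ∫ ω, F k ω ∂μ ≤ 1 := by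
    intro k
    induction k with
    | zero => intro _; rw [hI0]
    | succ k ih =>
      intro hk1n
      have hkn : k ≤ n := by omega
      have hmem : k + 1 ∈ Icc 1 n := Finset.mem_Icc.2 ⟨by omega, hk1n⟩
      refine le_trans ?_ (ih hkn)
      -- notation
      set f : Ω → ℝ := (C (k + 1)).indicator fun ω => exp (l * S k ω - c * V (k + 1) ω)
        with hf_def
      set g : Ω → ℝ := fun ω => 1 + l * X (k + 1) ω + c * X (k + 1) ω ^ 2 with hg_def
      have hY_int : Integrable (X (k + 1)) μ := (hint (k + 1)).integrable one_le_two
      have hY2_int : Integrable (X (k + 1) ^ 2) μ := by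
        have := (hint (k + 1)).integrable_sq
        exact this.congr (ae_of_all _ fun ω => rfl)
      have hg_int : Integrable g μ := by
        rw [hg_def]
        exact ((integrable_const 1).add (hY_int.const_mul l)).add
          ((hY2_int.congr (ae_of_all _ fun ω => rfl)).const_mul c)
      have hf_meas' : StronglyMeasurable[ℱ k] f := hf_meas k (k + 1) k le_rfl hk1n le_rfl
      have hf_bound := hbound (k + 1) k hk1n (by omega)
      have hf_int : Integrable f μ := hFint (k + 1) k hk1n (by omega)
      have hf_nonneg : ∀ ω, 0 ≤ f ω :=
        fun ω => Set.indicator_nonneg (fun ω _ => (exp_pos _).le) ω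
      have hfg_int : Integrable (f * g) μ := by
        refine Integrable.mono' ((hg_int.norm).const_mul (exp (l * (k * r)))) ?_ ?_
        · exact ((hf_meas'.mono (ℱ.le k)).aestronglyMeasurable).mul hg_int.aestronglyMeasurable
        · filter_upwards [hf_bound] with ω hω
          rw [Pi.mul_apply, norm_mul]
          exact mul_le_mul_of_nonneg_right hω (norm_nonneg _)
      -- F (k+1) = f * exp (l * X (k+1))
      have hFsucc : F (k + 1) = fun ω => f ω * exp (l * X (k + 1) ω) := by
        funext ω
        simp only [hF_def, hf_def]
        by_cases hω : ω ∈ C (k + 1)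
        · rw [Set.indicator_of_mem hω, Set.indicator_of_mem hω]
          have hSs : S (k + 1) ω = S k ω + X (k + 1) ω := by
            rw [hS_def]
            exact Finset.sum_Icc_succ_top (by omega) _
          rw [hSs, ← Real.exp_add]
          ring_nf
        · rw [Set.indicator_of_notMem hω, Set.indicator_of_notMem hω, zero_mul]
      -- step 1 : ∫ F (k+1) ≤ ∫ f * g
      have step1 : ∫ ω, F (k + 1) ω ∂μ ≤ ∫ ω, (f * g) ω ∂μ := by
        refine integral_mono_ae (hFint (k + 1) (k + 1) hk1n le_rfl) hfg_int ?_
        filter_upwards [hXR (k + 1) hmem] with ω hXRω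
        simp only [hFsucc, Pi.mul_apply]
        by_cases hω : ω ∈ C (k + 1)
        · refine mul_le_mul_of_nonneg_left ?_ (hf_nonneg ω)
          have hxr : X (k + 1) ω ≤ r :=
            le_trans hXRω (hω (k + 1) (Finset.mem_Icc.2 ⟨by omega, le_rfl⟩))
          exact hkey _ hxr
        · have h0 : f ω = 0 := Set.indicator_of_notMem hω _
          simp [h0]
      -- conditional expectation computations
      have hpull : μ[f * g|ℱ k] =ᵐ[μ] f * μ[g|ℱ k] :=
        condExp_mul_of_stronglyMeasurable_left hf_meas' hfg_int hg_int
      have hcg : μ[g|ℱ k] =ᵐ[μ]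
          fun ω => 1 + c * (μ[X (k + 1) ^ 2|ℱ k]) ω := by
        have e1 : g = (fun _ => (1:ℝ)) + (l • X (k + 1) + c • (X (k + 1) ^ 2)) := by
          funext ω
          simp only [hg_def, Pi.add_apply, Pi.smul_apply, smul_eq_mul, Pi.pow_apply]
          ring
        rw [e1]
        refine (condExp_add (integrable_const 1)
          ((hY_int.smul l).add (hY2_int.smul c)) (ℱ k)).trans ?_
        have h2 := condExp_add (μ := μ) (m := ℱ k) (hY_int.smul l) (hY2_int.smul c)
        have h3 := condExp_smul (μ := μ) (m := ℱ k) l (X (k + 1))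
        have h4 := condExp_smul (μ := μ) (m := ℱ k) c (X (k + 1) ^ 2)
        have h5 : μ[X (k + 1)|ℱ k] =ᵐ[μ] 0 := hmds (k + 1) hmem
        rw [condExp_const (ℱ.le k)]
        filter_upwards [h2, h3, h4, h5] with ω h2ω h3ω h4ω h5ω
        simp only [Pi.add_apply] at *
        rw [h2ω, h3ω, h4ω]
        simp only [Pi.smul_apply, smul_eq_mul, h5ω, Pi.zero_apply]
        ring
      set W : Ω → ℝ := μ[X (k + 1) ^ 2|ℱ k] with hW_def
      -- step 2 : ∫ f * g = ∫ f * (1 + c W)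
      have step2 : ∫ ω, (f * g) ω ∂μ = ∫ ω, f ω * (1 + c * W ω) ∂μ := by
        rw [← integral_condExp (ℱ.le k) (f := f * g)]
        refine integral_congr_ae (hpull.trans ?_)
        filter_upwards [hcg] with ω hω
        rw [Pi.mul_apply, hω]
      -- step 3 : ∫ f * (1 + c W) ≤ ∫ F k
      have step3 : ∫ ω, f ω * (1 + c * W ω) ∂μ ≤ ∫ ω, F k ω ∂μ := by
        have hint1 : Integrable (fun ω => f ω * (1 + c * W ω)) μ := by
          refine (integrable_condExp (f := f * g)).congr (hpull.trans ?_)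
          filter_upwards [hcg] with ω hω
          rw [Pi.mul_apply, hω]
        refine integral_mono_ae hint1 (hFint k k hkn le_rfl) (ae_of_all _ fun ω => ?_)
        have h1 : f ω * (1 + c * W ω) ≤ f ω * exp (c * W ω) :=
          mul_le_mul_of_nonneg_left (by linarith [add_one_le_exp (c * W ω)]) (hf_nonneg ω)
        refine le_trans h1 ?_
        by_cases hω : ω ∈ C (k + 1)
        · have hωk : ω ∈ C k := by
            intro t ht
            have ht' := Finset.mem_Icc.1 ht
            exact hω t (Finset.mem_Icc.2 ⟨ht'.1, by omega⟩)
          simp only [hf_def, hF_def]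
          rw [Set.indicator_of_mem hω, Set.indicator_of_mem hωk,
            ← Real.exp_add, exp_le_exp]
          have hVs : V (k + 1) ω = V k ω + W ω := by
            rw [hV_def, hW_def]
            exact Finset.sum_Icc_succ_top (by omega) _
          rw [hVs]
          ring_nf
          exact le_rfl
        · rw [hf_def, Set.indicator_of_notMem hω, zero_mul]
          exact Set.indicator_nonneg (fun ω _ => (exp_pos _).le) ω
      calc ∫ ω, F (k + 1) ω ∂μ ≤ ∫ ω, (f * g) ω ∂μ := step1
        _ = ∫ ω, f ω * (1 + c * W ω) ∂μ := step2
        _ ≤ ∫ ω, F k ω ∂μ := step3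
  -- final: Markov
  have hIn := hmain n le_rfl
  have hFn_nonneg : 0 ≤ᵐ[μ] F n :=
    ae_of_all _ fun ω => Set.indicator_nonneg (fun ω _ => (exp_pos _).le) ω
  set a : ℝ := exp (l * ε - c * v) with ha_def
  have ha : 0 < a := exp_pos _
  have hsubset : {ω | ε ≤ ∑ t ∈ Icc 1 n, X t ω ∧
      (∑ t ∈ Icc 1 n, (μ[X t ^ 2|ℱ (t - 1)]) ω) ≤ v ∧
      ((Icc 1 n).sup' (Finset.nonempty_Icc.mpr hn) fun t => R t ω) ≤ r}
      ⊆ {ω | a ≤ F n ω} := by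
    rintro ω ⟨h1, h2, h3⟩
    have hωC : ω ∈ C n := by
      intro t ht
      exact le_trans (Finset.le_sup' (fun t => R t ω) ht) h3
    have hFn : F n ω = exp (l * S n ω - c * V n ω) := by
      simp only [hF_def]
      rw [Set.indicator_of_mem hωC]
    rw [Set.mem_setOf_eq, hFn, ha_def, exp_le_exp]
    have hS : ε ≤ S n ω := h1
    have hV : V n ω ≤ v := h2
    nlinarith
  have hmarkov := mul_meas_ge_le_integral_of_nonneg hFn_nonneg (hFint n n le_rfl le_rfl) a
  have hmeasle : (μ {ω | a ≤ F n ω}).toReal ≤ exp (c * v - l * ε) := by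
    have h1 : a * (μ {ω | a ≤ F n ω}).toReal ≤ 1 := le_trans hmarkov hIn
    have h2 : (μ {ω | a ≤ F n ω}).toReal ≤ 1 / a := by
      rw [le_div_iff₀ ha]
      linarith [h1]
    refine le_trans h2 ?_
    rw [ha_def, one_div, ← Real.exp_neg, neg_sub]
  have harith : c * v - l * ε = -(ε ^ 2 / (2 * v + 2 * ε * r / 3)) := by
    have hd2 : (0:ℝ) < 2 * v + 2 * ε * r / 3 := by positivity
    rw [hc_def, hl_def]
    have h9 : (3:ℝ) - 3 * ε / (3 * v + ε * r) * r = 9 * v / (3 * v + ε * r) := by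
      field_simp
      ring
    rw [h9]
    field_simp
    ring
  calc μ {ω | ε ≤ ∑ t ∈ Icc 1 n, X t ω ∧
      (∑ t ∈ Icc 1 n, (μ[X t ^ 2|ℱ (t - 1)]) ω) ≤ v ∧
      ((Icc 1 n).sup' (Finset.nonempty_Icc.mpr hn) fun t => R t ω) ≤ r}
      ≤ μ {ω | a ≤ F n ω} := measure_mono hsubset
    _ ≤ ENNReal.ofReal (exp (-(ε ^ 2 / (2 * v + 2 * ε * r / 3)))) := by
        rw [← harith]
        exact (ENNReal.le_ofReal_iff_toReal_le (measure_ne_top μ _) (exp_pos _).le).2 hmeasle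
end

section
/- For any $\nu > 0$, $\min\{1,\nu\} \cdot \sum_{t=1}^{\infty} 2^t \,(1 - \min\{1, 2^{-t}/\nu\}) \prod_{s=1}^{t-1} \min\{1, 2^{-s}/\nu\} \leq 4$. -/
open Finset

set_option maxHeartbeats 1600000 in
/-- The expected ratio `min{1,ν}/ν̲₀` of the halving initialisation is at most `4`:
the procedure stops at step `t` (allocating `2⁻ᵗ`) with probability
`(1 - min{1,2⁻ᵗ/ν}) ∏_{s<t} min{1,2⁻ˢ/ν}`, returning `ν̲₀ = 2⁻ᵗ`.
(The outer sum over `t ≥ 1` is indexed by `t = t' + 1`, `t' : ℕ`.) -/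
theorem stmt8 (ν : ℝ) (hν : 0 < ν) :
    min 1 ν * ∑' t : ℕ, (2 : ℝ) ^ (t + 1) *
        (1 - min 1 ((2 : ℝ)⁻¹ ^ (t + 1) / ν)) *
        ∏ s ∈ Icc 1 t, min 1 ((2 : ℝ)⁻¹ ^ s / ν) ≤ 4 := by
  set a : ℕ → ℝ := fun s => min 1 ((2 : ℝ)⁻¹ ^ s / ν) with ha
  set P : ℕ → ℝ := fun t => ∏ s ∈ Icc 1 t, a s with hP
  set f : ℕ → ℝ := fun t => (2 : ℝ) ^ (t + 1) * (1 - a (t + 1)) * P t with hf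
  have ha0 : ∀ s, 0 ≤ a s := fun s => le_min zero_le_one (by positivity)
  have ha1 : ∀ s, a s ≤ 1 := fun s => min_le_left _ _
  have haub : ∀ s, a s ≤ (2 : ℝ)⁻¹ ^ s / ν := fun s => min_le_right _ _
  have hP0 : ∀ t, 0 ≤ P t := fun t => Finset.prod_nonneg fun s _ => ha0 s
  have hP1 : ∀ t, P t ≤ 1 := fun t =>
    Finset.prod_le_one (fun s _ => ha0 s) fun s _ => ha1 s
  have hPs : ∀ t, P (t + 1) = P t * a (t + 1) := fun t => by
    rw [hP]; exact Finset.prod_Icc_succ_top (Nat.le_add_left 1 t) a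
  have hPzero : P 0 = 1 := by
    rw [hP]
    simp
  have hf0 : ∀ t, 0 ≤ f t := fun t => by
    have h1 : (0:ℝ) ≤ 1 - a (t + 1) := by linarith [ha1 (t + 1)]
    have h2 := hP0 t
    rw [hf]
    positivity
  have hm : 0 < min 1 ν := lt_min one_pos hν
  -- Abel summation identity
  have key : ∀ N, ∑ t ∈ range N, f t + 2 ^ N * P N
      = 1 + ∑ t ∈ range N, (2:ℝ) ^ t * P t := by
    intro N
    induction N with
    | zero => simp [hPzero]
    | succ N ih =>
      rw [Finset.sum_range_succ, Finset.sum_range_succ, hPs N]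
      simp only [hf] at ih ⊢
      linear_combination ih
  have hsum_le : ∀ N, ∑ t ∈ range N, f t ≤ 1 + ∑ t ∈ range N, (2:ℝ) ^ t * P t := by
    intro N
    have h2 : (0:ℝ) ≤ 2 ^ N * P N := by positivity
    linarith [key N]
  -- main bound on the Abel-transformed sum
  have B : ∀ N, min 1 ν * (1 + ∑ t ∈ range N, (2:ℝ) ^ t * P t) ≤ 4 := by
    intro N
    rcases le_or_gt 1 ν with h1ν | h1ν
    · -- case ν ≥ 1
      rw [min_eq_left h1ν, one_mul]
      have tail1 : ∀ i, (2:ℝ) ^ (1 + i) * P (1 + i) ≤ (1/2 : ℝ) ^ i := by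
        intro i
        induction i with
        | zero =>
          have hP1eq : P 1 = a 1 := by rw [hP]; simp
          have h1 : a 1 ≤ 2⁻¹ := by
            refine (haub 1).trans ?_
            rw [pow_one]
            exact div_le_self (by norm_num) h1ν
          have : (2:ℝ) ^ (1 + 0) * P (1 + 0) = 2 * a 1 := by
            rw [show (1:ℕ) + 0 = 1 from rfl, hP1eq]; norm_num
          rw [this]
          norm_num
          linarith
        | succ i ih =>
          have hstep : P (1 + (i+1)) = P (1 + i) * a (1 + i + 1) := by
            rw [show 1 + (i + 1) = (1 + i) + 1 from by ring, hPs]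
          have haq : a (1 + i + 1) ≤ (1/4 : ℝ) := by
            refine (haub _).trans ?_
            have hpow : (2:ℝ)⁻¹ ^ (1 + i + 1) ≤ (1/4 : ℝ) := by
              have he : (2:ℝ)⁻¹ ^ (1 + i + 1) = (2:ℝ)⁻¹ ^ 2 * (2:ℝ)⁻¹ ^ i := by ring
              have h2 : (2:ℝ)⁻¹ ^ i ≤ 1 := pow_le_one₀ (by norm_num) (by norm_num)
              have h3 : (0:ℝ) ≤ (2:ℝ)⁻¹ ^ i := by positivity
              rw [he]; nlinarith
            refine le_trans ?_ hpow
            exact div_le_self (by positivity) h1ν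
          have hmul : (2:ℝ) ^ (1 + i) * P (1 + i) * a (1 + i + 1)
              ≤ (1/2:ℝ) ^ i * (1/4) :=
            mul_le_mul ih haq (ha0 _) (by positivity)
          calc (2:ℝ) ^ (1 + (i+1)) * P (1 + (i+1))
              = 2 * ((2:ℝ) ^ (1 + i) * P (1 + i) * a (1 + i + 1)) := by
                rw [hstep]; ring
            _ ≤ 2 * ((1/2:ℝ) ^ i * (1/4)) := by linarith
            _ = (1/2:ℝ) ^ (i + 1) := by ring
      rcases N with _ | M
      · norm_num
      · have hsplit : ∑ t ∈ range (1 + M), (2:ℝ) ^ t * P t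
            = ∑ t ∈ range 1, (2:ℝ) ^ t * P t
              + ∑ i ∈ range M, (2:ℝ) ^ (1 + i) * P (1 + i) :=
          Finset.sum_range_add (fun t => (2:ℝ) ^ t * P t) 1 M
        have h1eq : ∑ t ∈ range 1, (2:ℝ) ^ t * P t = 1 := by simp [hPzero]
        have htail : ∑ i ∈ range M, (2:ℝ) ^ (1 + i) * P (1 + i)
            ≤ ∑ i ∈ range M, (1/2 : ℝ) ^ i :=
          Finset.sum_le_sum fun i _ => tail1 i
        have hgeo := sum_geometric_two_le M
        rw [show M + 1 = 1 + M from by omega, hsplit, h1eq]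
        linarith
    · -- case ν < 1
      rw [min_eq_right h1ν.le]
      obtain ⟨n, hn⟩ := pow_unbounded_of_one_lt (1/ν) (one_lt_two (α := ℝ))
      have hex : ∃ j, (1:ℝ) ≤ 2 ^ j * ν := by
        refine ⟨n, ?_⟩
        rw [div_lt_iff₀ hν] at hn
        nlinarith
      obtain ⟨k, hx1, hkmin⟩ : ∃ k, (1:ℝ) ≤ 2 ^ k * ν ∧
          ∀ m, m < k → ¬ (1:ℝ) ≤ 2 ^ m * ν :=
        ⟨Nat.find hex, Nat.find_spec hex, fun m hm => Nat.find_min hex hm⟩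
      have hkpos : k ≠ 0 := by
        intro h
        rw [h] at hx1
        norm_num at hx1
        linarith
      obtain ⟨k', hk'⟩ : ∃ k', k = k' + 1 :=
        ⟨k - 1, (Nat.succ_pred_eq_of_pos (Nat.pos_of_ne_zero hkpos)).symm⟩
      have hmin : ¬ (1:ℝ) ≤ 2 ^ k' * ν := hkmin k' (by omega)
      push_neg at hmin
      set x : ℝ := 2 ^ k * ν with hxdef
      have hxpos : (0:ℝ) < x := by positivity
      have hx2 : x < 2 := by
        have hxe : x = 2 * (2 ^ k' * ν) := by rw [hxdef, hk']; ring
        rw [hxe]; linarith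
      have hpowinv : (2:ℝ)⁻¹ ^ k = ((2:ℝ) ^ k)⁻¹ := by rw [inv_pow]
      have h2kpos : (0:ℝ) < 2 ^ k := by positivity
      -- middle term: ν * (2^k * P k) ≤ 1
      have hmid : ν * ((2:ℝ) ^ k * P k) ≤ 1 := by
        have hPk : P k = P k' * a k := by rw [hk']; exact hPs k'
        have hak' : a k ≤ ((2:ℝ) ^ k)⁻¹ / ν := by rw [← hpowinv]; exact haub k
        have hPub : P k ≤ ((2:ℝ) ^ k)⁻¹ / ν := by
          rw [hPk]
          calc P k' * a k ≤ 1 * (((2:ℝ) ^ k)⁻¹ / ν) :=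
                mul_le_mul (hP1 k') hak' (ha0 k) zero_le_one
            _ = ((2:ℝ) ^ k)⁻¹ / ν := one_mul _
        calc ν * ((2:ℝ) ^ k * P k) ≤ ν * ((2:ℝ) ^ k * (((2:ℝ) ^ k)⁻¹ / ν)) := by
              refine mul_le_mul_of_nonneg_left ?_ hν.le
              exact mul_le_mul_of_nonneg_left hPub h2kpos.le
          _ = 1 := by field_simp <;> ring
      -- tail: ν * 2^(k+1+i) * P (k+1+i) ≤ x⁻¹ * ((2*x)⁻¹)^i
      have tail2 : ∀ i, ν * ((2:ℝ) ^ (k + 1 + i) * P (k + 1 + i))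
          ≤ x⁻¹ * ((2 * x)⁻¹) ^ i := by
        intro i
        induction i with
        | zero =>
          simp only [Nat.add_zero, pow_zero, mul_one]
          have hPk1 : P (k + 1) = P k' * a k * a (k + 1) := by
            rw [show k + 1 = (k' + 1) + 1 from by rw [hk'], hPs, hPs, ← hk']
          have hak1 : a (k + 1) ≤ (2:ℝ)⁻¹ ^ (k+1) / ν := haub (k + 1)
          have hak' : a k ≤ ((2:ℝ) ^ k)⁻¹ / ν := by rw [← hpowinv]; exact haub k
          have h1 : P (k + 1) ≤ (((2:ℝ) ^ k)⁻¹ / ν) * ((2:ℝ)⁻¹ ^ (k+1) / ν) := by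
            rw [hPk1]
            calc P k' * a k * a (k + 1)
                ≤ 1 * (((2:ℝ) ^ k)⁻¹ / ν) * ((2:ℝ)⁻¹ ^ (k+1) / ν) :=
                  mul_le_mul (mul_le_mul (hP1 k') hak' (ha0 k) zero_le_one)
                    hak1 (ha0 _) (by positivity)
              _ = (((2:ℝ) ^ k)⁻¹ / ν) * ((2:ℝ)⁻¹ ^ (k+1) / ν) := by ring
          have heq : ν * ((2:ℝ) ^ (k + 1)
                * ((((2:ℝ) ^ k)⁻¹ / ν) * ((2:ℝ)⁻¹ ^ (k+1) / ν))) = x⁻¹ := by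
            rw [show (2:ℝ)⁻¹ ^ (k+1) = ((2:ℝ) ^ (k+1))⁻¹ from by rw [inv_pow],
              hxdef, pow_succ]
            have hν' : ν ≠ 0 := hν.ne'
            have h2k : ((2:ℝ) ^ k) ≠ 0 := h2kpos.ne'
            field_simp <;> ring
          calc ν * ((2:ℝ) ^ (k + 1) * P (k + 1))
              ≤ ν * ((2:ℝ) ^ (k + 1)
                  * ((((2:ℝ) ^ k)⁻¹ / ν) * ((2:ℝ)⁻¹ ^ (k+1) / ν))) := by
                refine mul_le_mul_of_nonneg_left ?_ hν.le
                exact mul_le_mul_of_nonneg_left h1 (by positivity)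
            _ = x⁻¹ := heq
        | succ i ih =>
          have hstep : P (k + 1 + (i + 1)) = P (k + 1 + i) * a (k + 1 + i + 1) := by
            rw [show k + 1 + (i + 1) = (k + 1 + i) + 1 from by ring, hPs]
          have haq : a (k + 1 + i + 1) ≤ (1/4 : ℝ) * x⁻¹ := by
            refine (haub _).trans ?_
            have h2e : (2:ℝ)⁻¹ ^ (k + 1 + i + 1)
                = (2:ℝ)⁻¹ ^ k * ((2:ℝ)⁻¹ ^ 2 * (2:ℝ)⁻¹ ^ i) := by ring
            have hile : (2:ℝ)⁻¹ ^ i ≤ 1 := pow_le_one₀ (by norm_num) (by norm_num)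
            have hnn : (0:ℝ) < (2:ℝ)⁻¹ ^ k := by positivity
            have hi0 : (0:ℝ) ≤ (2:ℝ)⁻¹ ^ i := by positivity
            have hb : (2:ℝ)⁻¹ ^ (k + 1 + i + 1) ≤ (2:ℝ)⁻¹ ^ k * (1/4) := by
              rw [h2e]
              have h4 : (2:ℝ)⁻¹ ^ 2 * (2:ℝ)⁻¹ ^ i ≤ (1/4 : ℝ) := by nlinarith
              nlinarith
            calc (2:ℝ)⁻¹ ^ (k + 1 + i + 1) / ν ≤ ((2:ℝ)⁻¹ ^ k * (1/4)) / ν :=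
                  (div_le_div_iff_of_pos_right hν).mpr hb
              _ = (1/4 : ℝ) * x⁻¹ := by
                  rw [hpowinv, hxdef]
                  field_simp <;> ring
          have hmul : ν * ((2:ℝ) ^ (k + 1 + i) * P (k + 1 + i)) * a (k + 1 + i + 1)
              ≤ (x⁻¹ * ((2 * x)⁻¹) ^ i) * ((1/4 : ℝ) * x⁻¹) :=
            mul_le_mul ih haq (ha0 _) (by positivity)
          have h2x : ((2:ℝ) * x)⁻¹ = 2⁻¹ * x⁻¹ := by rw [mul_inv]
          calc ν * ((2:ℝ) ^ (k + 1 + (i + 1)) * P (k + 1 + (i + 1)))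
              = 2 * (ν * ((2:ℝ) ^ (k + 1 + i) * P (k + 1 + i)) * a (k + 1 + i + 1)) := by
                rw [hstep]; ring
            _ ≤ 2 * ((x⁻¹ * ((2 * x)⁻¹) ^ i) * ((1/4 : ℝ) * x⁻¹)) := by linarith
            _ = x⁻¹ * ((2 * x)⁻¹) ^ (i + 1) := by
                rw [pow_succ, h2x]; ring
      -- assemble
      have hmono : ∑ t ∈ range N, (2:ℝ) ^ t * P t
          ≤ ∑ t ∈ range (k + 1 + N), (2:ℝ) ^ t * P t := by
        refine Finset.sum_le_sum_of_subset_of_nonneg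
          (Finset.range_subset_range.mpr (by omega)) fun t _ _ => by positivity
      have hsplit : ∑ t ∈ range (k + 1 + N), (2:ℝ) ^ t * P t
          = ∑ t ∈ range (k + 1), (2:ℝ) ^ t * P t
            + ∑ i ∈ range N, (2:ℝ) ^ (k + 1 + i) * P (k + 1 + i) :=
        Finset.sum_range_add (fun t => (2:ℝ) ^ t * P t) (k + 1) N
      have hsplit2 : ∑ t ∈ range (k + 1), (2:ℝ) ^ t * P t
          = ∑ t ∈ range k, (2:ℝ) ^ t * P t + (2:ℝ) ^ k * P k :=
        Finset.sum_range_succ _ k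
      have hhead : ∑ t ∈ range k, (2:ℝ) ^ t * P t ≤ (2:ℝ) ^ k - 1 := by
        have h1 : ∑ t ∈ range k, (2:ℝ) ^ t * P t ≤ ∑ t ∈ range k, (2:ℝ) ^ t := by
          refine Finset.sum_le_sum fun t _ => ?_
          have := hP1 t
          have h2 : (0:ℝ) < 2 ^ t := by positivity
          nlinarith
        have h2 : ∑ t ∈ range k, (2:ℝ) ^ t = ((2:ℝ) ^ k - 1) / (2 - 1) :=
          geom_sum_eq (by norm_num) k
        rw [h2] at h1
        linarith [h1]
      -- geometric tail bound
      set r : ℝ := (2 * x)⁻¹ with hr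
      have hr0 : (0:ℝ) ≤ r := by positivity
      have hr1 : r < 1 := by
        have h2x : (2:ℝ) ≤ 2 * x := by linarith
        have : r ≤ 2⁻¹ := by
          rw [hr]
          exact inv_anti₀ (by norm_num) h2x
        linarith
      have hgs : ∑ i ∈ range N, r ^ i ≤ (1 - r)⁻¹ := by
        have hsummable := summable_geometric_of_lt_one hr0 hr1
        have h := Summable.sum_le_tsum (range N) (fun i _ => pow_nonneg hr0 i) hsummable
        rwa [tsum_geometric_of_lt_one hr0 hr1] at h
      have htail : ν * ∑ i ∈ range N, (2:ℝ) ^ (k + 1 + i) * P (k + 1 + i)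
          ≤ 3 - x := by
        have h1 : ν * ∑ i ∈ range N, (2:ℝ) ^ (k + 1 + i) * P (k + 1 + i)
            = ∑ i ∈ range N, ν * ((2:ℝ) ^ (k + 1 + i) * P (k + 1 + i)) := by
          rw [Finset.mul_sum]
        have h2 : ∑ i ∈ range N, ν * ((2:ℝ) ^ (k + 1 + i) * P (k + 1 + i))
            ≤ ∑ i ∈ range N, x⁻¹ * r ^ i :=
          Finset.sum_le_sum fun i _ => tail2 i
        have h3 : ∑ i ∈ range N, x⁻¹ * r ^ i = x⁻¹ * ∑ i ∈ range N, r ^ i := by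
          rw [Finset.mul_sum]
        have h4 : x⁻¹ * ∑ i ∈ range N, r ^ i ≤ x⁻¹ * (1 - r)⁻¹ :=
          mul_le_mul_of_nonneg_left hgs (by positivity)
        have h5 : x⁻¹ * (1 - r)⁻¹ ≤ 3 - x := by
          have h2x1 : (0:ℝ) < 2 * x - 1 := by linarith
          have he : x⁻¹ * (1 - r)⁻¹ = 2 / (2 * x - 1) := by
            rw [hr]
            rw [show (1:ℝ) - (2 * x)⁻¹ = (2 * x - 1) / (2 * x) from by
              field_simp]
            field_simp
          rw [he, div_le_iff₀ h2x1]
          nlinarith [mul_nonneg (sub_nonneg.2 hx1) (by linarith : (0:ℝ) ≤ 5 - 2 * x)]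
        linarith [h1, h2, h3, h4, h5]
        -- careful: h1,h3 are equalities
      have hheadν : ν * ∑ t ∈ range k, (2:ℝ) ^ t * P t ≤ ν * ((2:ℝ) ^ k - 1) :=
        mul_le_mul_of_nonneg_left hhead hν.le
      have hxeq : ν * ((2:ℝ) ^ k - 1) = x - ν := by rw [hxdef]; ring
      calc ν * (1 + ∑ t ∈ range N, (2:ℝ) ^ t * P t)
          ≤ ν * (1 + ∑ t ∈ range (k + 1 + N), (2:ℝ) ^ t * P t) := by
            refine mul_le_mul_of_nonneg_left (by linarith) hν.le
        _ = ν + ν * ∑ t ∈ range k, (2:ℝ) ^ t * P t + ν * ((2:ℝ) ^ k * P k)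
            + ν * ∑ i ∈ range N, (2:ℝ) ^ (k + 1 + i) * P (k + 1 + i) := by
            rw [hsplit, hsplit2]; ring
        _ ≤ ν + (x - ν) + 1 + (3 - x) := by
            have := hmid
            linarith [hheadν, hxeq]
        _ = 4 := by ring
  -- put everything together
  have hle : ∀ N, ∑ t ∈ range N, f t ≤ 4 / min 1 ν := by
    intro N
    rw [le_div_iff₀ hm]
    calc (∑ t ∈ range N, f t) * min 1 ν
        ≤ (1 + ∑ t ∈ range N, (2:ℝ) ^ t * P t) * min 1 ν := by
          have h1 : (0:ℝ) ≤ min 1 ν := hm.le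
          have := hsum_le N
          nlinarith
      _ = min 1 ν * (1 + ∑ t ∈ range N, (2:ℝ) ^ t * P t) := mul_comm _ _
      _ ≤ 4 := B N
  have htsum : ∑' t, f t ≤ 4 / min 1 ν := Real.tsum_le_of_sum_range_le hf0 hle
  calc min 1 ν * ∑' t, f t ≤ min 1 ν * (4 / min 1 ν) :=
        mul_le_mul_of_nonneg_left htsum hm.le
    _ = 4 := by
      rw [mul_comm, div_mul_cancel₀ _ hm.ne']
end
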